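/- Suppose e_1 ≥ e_2 ≥ ... ≥ e_k are nonnegative integers with e_1 + ... + e_k = n(n-1)/2, and K_n admits a Gallai k-coloring with exactly e_i edges of color i for each i. Then for every 1 ≤ ℓ ≤ k, the partial sum e_1 + ... + e_ℓ is at least (n-1) + (n-2) + ... + (n-ℓ). -/

import Mathlib

set_option maxHeartbeats 1600000

/-- An edge coloring of `K_n` (edges = non-diagonal elements of `Sym2 (Fin n)`)
is a Gallai coloring if no triangle receives three pairwise distinct colors. -/
def IsGallai {n : ℕ} {C : Type*} (c : Sym2 (Fin n) → C) : Prop :=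
  ∀ a b d : Fin n, a ≠ b → b ≠ d → a ≠ d →
    c s(a, b) = c s(b, d) ∨ c s(b, d) = c s(a, d) ∨ c s(a, b) = c s(a, d)

/-- The number of edges of `K_n` receiving color `i`. -/
def colorCard {n : ℕ} {C : Type*} [DecidableEq C] (c : Sym2 (Fin n) → C) (i : C) : ℕ :=
  (Finset.univ.filter (fun e : Sym2 (Fin n) => ¬ e.IsDiag ∧ c e = i)).card

namespace Gallai

lemma pairProd {a b : ℕ} (ha : 1 ≤ a) (hb : 1 ≤ b) :
    a * (a - 1) + b * (b - 1) ≤ (a + b - 1) * (a + b - 2) := by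
  obtain ⟨a, rfl⟩ := Nat.exists_eq_add_of_le ha
  obtain ⟨b, rfl⟩ := Nat.exists_eq_add_of_le hb
  simp only [Nat.add_sub_cancel_left]
  have h1 : 1 + a + (1 + b) - 1 = 1 + a + b := by omega
  have h2 : 1 + a + (1 + b) - 2 = a + b := by omega
  rw [h1, h2]
  ring_nf
  nlinarith [Nat.zero_le (a*b)]

lemma fmono {x y : ℕ} (h : x ≤ y) : x * (x - 1) ≤ y * (y - 1) :=
  Nat.mul_le_mul h (by omega)

lemma budget {α : Type*} [DecidableEq α] (P : Finset α) (sz : α → ℕ)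
    (hP : P.Nonempty) :
    ∀ (_ : ∀ T ∈ P, 1 ≤ sz T) (m : ℕ),
    ∃ bud : α → ℕ, (∑ T ∈ P, bud T ≤ m) ∧
      (∑ T ∈ P, (sz T - bud T) * (sz T - bud T - 1)
        ≤ ((∑ T ∈ P, sz T) - m - (P.card - 1)) * ((∑ T ∈ P, sz T) - m - (P.card - 1) - 1)) := by
  induction hP using Finset.Nonempty.cons_induction with
  | singleton a =>
    intro hsz m
    refine ⟨fun _ => m, by simp, ?_⟩
    simp
  | cons a s ha hs IH =>
    intro hsz m
    have hsz' : ∀ T ∈ s, 1 ≤ sz T := fun T hT => hsz T (Finset.mem_cons_of_mem hT)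
    have hsza : 1 ≤ sz a := hsz a (Finset.mem_cons_self a s)
    have hSsum : s.card ≤ ∑ T ∈ s, sz T := by
      calc s.card = ∑ _T ∈ s, 1 := by simp
      _ ≤ ∑ T ∈ s, sz T := Finset.sum_le_sum hsz'
    have hspos := hs.card_pos
    by_cases hcase : sz a - 1 ≤ m
    · obtain ⟨bud', h1, h2⟩ := IH hsz' (m - (sz a - 1))
      set bud : α → ℕ := fun T => if T = a then sz a - 1 else bud' T with hbud
      have hsame : ∑ T ∈ s, bud T = ∑ T ∈ s, bud' T :=
        Finset.sum_congr rfl (fun T hT => by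
          simp only [hbud, if_neg (show T ≠ a by rintro rfl; exact ha hT)])
      have hsame2 : ∑ T ∈ s, (sz T - bud T) * (sz T - bud T - 1)
          = ∑ T ∈ s, (sz T - bud' T) * (sz T - bud' T - 1) :=
        Finset.sum_congr rfl (fun T hT => by
          simp only [hbud, if_neg (show T ≠ a by rintro rfl; exact ha hT)])
      have hbuda : bud a = sz a - 1 := by simp [hbud]
      refine ⟨bud, ?_, ?_⟩
      · rw [Finset.sum_cons, hsame, hbuda]
        omega
      · rw [Finset.sum_cons, hsame2, hbuda]
        have e0 : (sz a - (sz a - 1)) * (sz a - (sz a - 1) - 1) = 0 := by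
          have : sz a - (sz a - 1) = 1 := by omega
          rw [this]
        rw [e0, zero_add]
        refine h2.trans (fmono ?_)
        rw [Finset.sum_cons, Finset.card_cons]
        omega
    · obtain ⟨bud', h1, h2⟩ := IH hsz' 0
      set bud : α → ℕ := fun T => if T = a then m else bud' T with hbud
      have hsame : ∑ T ∈ s, bud T = ∑ T ∈ s, bud' T :=
        Finset.sum_congr rfl (fun T hT => by
          simp only [hbud, if_neg (show T ≠ a by rintro rfl; exact ha hT)])
      have hsame2 : ∑ T ∈ s, (sz T - bud T) * (sz T - bud T - 1)
          = ∑ T ∈ s, (sz T - bud' T) * (sz T - bud' T - 1) :=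
        Finset.sum_congr rfl (fun T hT => by
          simp only [hbud, if_neg (show T ≠ a by rintro rfl; exact ha hT)])
      have hbuda : bud a = m := by simp [hbud]
      refine ⟨bud, ?_, ?_⟩
      · rw [Finset.sum_cons, hsame, hbuda]
        omega
      · rw [Finset.sum_cons, hsame2, hbuda]
        have hx : 1 ≤ sz a - m := by omega
        have hy : 1 ≤ (∑ T ∈ s, sz T) - 0 - (s.card - 1) := by omega
        calc (sz a - m) * (sz a - m - 1) + ∑ T ∈ s, (sz T - bud' T) * (sz T - bud' T - 1)
            ≤ (sz a - m) * (sz a - m - 1) +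
              ((∑ T ∈ s, sz T) - 0 - (s.card - 1)) * ((∑ T ∈ s, sz T) - 0 - (s.card - 1) - 1) :=
              Nat.add_le_add_left h2 _
          _ ≤ ((sz a - m) + ((∑ T ∈ s, sz T) - 0 - (s.card - 1)) - 1) *
              ((sz a - m) + ((∑ T ∈ s, sz T) - 0 - (s.card - 1)) - 2) := pairProd hx hy
          _ ≤ _ := by
              rw [Finset.sum_cons, Finset.card_cons]
              have e1 : sz a - m + ((∑ T ∈ s, sz T) - 0 - (s.card - 1)) - 1
                  = (sz a + ∑ T ∈ s, sz T) - m - (s.card + 1 - 1) := by omega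
              have e2 : sz a - m + ((∑ T ∈ s, sz T) - 0 - (s.card - 1)) - 2
                  = (sz a + ∑ T ∈ s, sz T) - m - (s.card + 1 - 1) - 1 := by omega
              rw [e1, e2]

variable {n k : ℕ}

lemma csym (c : Sym2 (Fin n) → Fin k) (a b : Fin n) : c s(a, b) = c s(b, a) :=
  congrArg c Sym2.eq_swap

def adjC (c : Sym2 (Fin n) → Fin k) (W : Finset (Fin n)) (x : Fin k) (a b : Fin n) : Prop :=
  a ∈ W ∧ b ∈ W ∧ a ≠ b ∧ c s(a, b) = x

def reach (c : Sym2 (Fin n) → Fin k) (W : Finset (Fin n)) (x : Fin k) : Fin n → Fin n → Prop :=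
  Relation.ReflTransGen (adjC c W x)

def cnt (c : Sym2 (Fin n) → Fin k) (W : Finset (Fin n)) (S : Finset (Fin k)) : ℕ :=
  (W.offDiag.filter (fun p => c s(p.1, p.2) ∈ S)).card

def usedC (c : Sym2 (Fin n) → Fin k) (W : Finset (Fin n)) : Finset (Fin k) :=
  W.offDiag.image (fun p => c s(p.1, p.2))

variable {c : Sym2 (Fin n) → Fin k} {W : Finset (Fin n)} {x : Fin k}

lemma adjC_symm : Symmetric (adjC c W x) := by
  rintro a b ⟨ha, hb, hab, hx⟩
  exact ⟨hb, ha, hab.symm, (csym c b a).trans hx⟩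

lemma reach_symm {a b : Fin n} (h : reach c W x a b) : reach c W x b a :=
  by haveI : Std.Symm (adjC c W x) := ⟨fun _ _ h' => adjC_symm h'⟩; exact Std.Symm.symm (r := Relation.ReflTransGen (adjC c W x)) _ _ h

lemma reach_mem {a b : Fin n} (ha : a ∈ W) (h : reach c W x a b) : b ∈ W := by
  induction h with
  | refl => exact ha
  | tail _ h2 _ => exact h2.2.1

lemma reach_adj {a b : Fin n} (h : adjC c W x a b) : reach c W x a b :=
  Relation.ReflTransGen.single h

lemma reach_mono {W' : Finset (Fin n)} (hWW : W ⊆ W') {a b : Fin n} (h : reach c W x a b) :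
    reach c W' x a b := by
  refine Relation.ReflTransGen.mono (?_ : ∀ p q, adjC c W x p q → adjC c W' x p q) _ _ h
  rintro p q ⟨hp, hq, hpq, hcol⟩
  exact ⟨hWW hp, hWW hq, hpq, hcol⟩

lemma reach_stay {A : Fin n → Prop} {a b : Fin n}
    (hcl : ∀ p q, adjC c W x p q → A p → A q) (h : reach c W x a b) (ha : A a) : A b := by
  induction h with
  | refl => exact ha
  | tail _ h2 ih => exact hcl _ _ h2 ih

lemma mem_used_iff {y : Fin k} :
    y ∈ usedC c W ↔ ∃ a ∈ W, ∃ b ∈ W, a ≠ b ∧ c s(a, b) = y := by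
  unfold usedC
  rw [Finset.mem_image]
  constructor
  · rintro ⟨p, hp, rfl⟩
    rw [Finset.mem_offDiag] at hp
    exact ⟨p.1, hp.1, p.2, hp.2.1, hp.2.2, rfl⟩
  · rintro ⟨a, ha, b, hb, hab, hy⟩
    exact ⟨(a, b), Finset.mem_offDiag.mpr ⟨ha, hb, hab⟩, hy⟩

lemma used_mono {W' : Finset (Fin n)} (h : W ⊆ W') : usedC c W ⊆ usedC c W' := by
  intro y hy
  rw [mem_used_iff] at *
  obtain ⟨a, ha, b, hb, hab, hy⟩ := hy
  exact ⟨a, h ha, b, h hb, hab, hy⟩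

lemma mono_comp (hc : IsGallai c) {u u' w : Fin n} (hu : u ∈ W) (hw : w ∈ W)
    (hnr : ¬ reach c W x u w) (h : reach c W x u u') :
    c s(u', w) = c s(u, w) := by
  induction h with
  | refl => rfl
  | @tail m' u'' h1 h2 ih =>
    have hm'W : m' ∈ W := reach_mem hu h1
    have hm'w : m' ≠ w := by rintro rfl; exact hnr h1
    have hcm' : c s(m', w) ≠ x := by
      intro hcc
      exact hnr (h1.tail ⟨hm'W, hw, hm'w, hcc⟩)
    obtain ⟨_, hu''W, hm'u'', hcol⟩ := id h2
    have hu''w : u'' ≠ w := by rintro rfl; exact hnr (h1.tail h2)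
    have hcu'' : c s(u'', w) ≠ x := by
      intro hcc
      exact hnr ((h1.tail h2).tail ⟨hu''W, hw, hu''w, hcc⟩)
    rcases hc m' u'' w hm'u'' hu''w hm'w with h' | h' | h'
    · exact absurd (h'.symm.trans hcol) hcu''
    · exact h'.trans ih
    · exact absurd (h'.symm.trans hcol) hcm'


lemma used_card (hc : IsGallai c) (hW : W.Nonempty) : (usedC c W).card + 1 ≤ W.card := by
  induction hW using Finset.Nonempty.cons_induction with
  | singleton a =>
    have : usedC c {a} = ∅ := by
      rw [Finset.eq_empty_iff_forall_notMem]
      intro y hy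
      rw [mem_used_iff] at hy
      obtain ⟨p, hp, q, hq, hpq, _⟩ := hy
      rw [Finset.mem_singleton] at hp hq
      exact hpq (hp.trans hq.symm)
    simp [this]
  | cons v s hv hs IH =>
    obtain ⟨u₀, hu₀⟩ := hs
    have hnew : ∀ u₁ ∈ s, ∀ u₂ ∈ s, c s(v, u₁) ∉ usedC c s → c s(v, u₂) ∉ usedC c s →
        c s(v, u₂) = c s(v, u₁) := by
      intro u₁ h₁ u₂ h₂ hn₁ hn₂
      by_cases he : u₁ = u₂
      · rw [he]
      · have hmem : c s(u₁, u₂) ∈ usedC c s := mem_used_iff.mpr ⟨u₁, h₁, u₂, h₂, he, rfl⟩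
        have hvu₁ : v ≠ u₁ := by rintro rfl; exact hv h₁
        have hvu₂ : v ≠ u₂ := by rintro rfl; exact hv h₂
        rcases hc u₁ v u₂ hvu₁.symm hvu₂ he with h' | h' | h'
        · exact h'.symm.trans (csym c u₁ v)
        · rw [← h'] at hmem; exact absurd hmem hn₂
        · have : c s(v, u₁) ∈ usedC c s := by rw [csym c v u₁, h']; exact hmem
          exact absurd this hn₁
    -- choose γ
    have hkey : ∃ γ, usedC c (Finset.cons v s hv) ⊆ insert γ (usedC c s) := by
      by_cases hex : ∃ u ∈ s, c s(v, u) ∉ usedC c s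
      · obtain ⟨u₁, h₁, hn₁⟩ := hex
        refine ⟨c s(v, u₁), ?_⟩
        intro y hy
        rw [mem_used_iff] at hy
        obtain ⟨a, ha, b, hb, hab, rfl⟩ := hy
        rw [Finset.mem_cons] at ha hb
        rw [Finset.mem_insert]
        rcases ha with rfl | ha
        · rcases hb with rfl | hb
          · exact absurd rfl hab
          · by_cases hn : c s(a, b) ∈ usedC c s
            · exact Or.inr hn
            · exact Or.inl (hnew u₁ h₁ b hb hn₁ hn)
        · rcases hb with rfl | hb
          · rw [csym c a b]
            by_cases hn : c s(b, a) ∈ usedC c s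
            · exact Or.inr hn
            · exact Or.inl (hnew u₁ h₁ a ha hn₁ hn)
          · exact Or.inr (mem_used_iff.mpr ⟨a, ha, b, hb, hab, rfl⟩)
      · push_neg at hex
        refine ⟨c s(v, u₀), ?_⟩
        intro y hy
        rw [mem_used_iff] at hy
        obtain ⟨a, ha, b, hb, hab, rfl⟩ := hy
        rw [Finset.mem_cons] at ha hb
        rw [Finset.mem_insert]
        rcases ha with rfl | ha
        · rcases hb with rfl | hb
          · exact absurd rfl hab
          · exact Or.inr (hex b hb)
        · rcases hb with rfl | hb
          · rw [csym c a b]; exact Or.inr (hex a ha)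
          · exact Or.inr (mem_used_iff.mpr ⟨a, ha, b, hb, hab, rfl⟩)
    obtain ⟨γ, hsub⟩ := hkey
    have h1 := Finset.card_le_card hsub
    have h2 := Finset.card_insert_le γ (usedC c s)
    rw [Finset.card_cons]
    omega

-- Lemma B
lemma lemB (hc : IsGallai c) : ∀ (N : ℕ) (W : Finset (Fin n)), W.card ≤ N → 2 ≤ W.card →
    ∃ i, (∀ a ∈ W, ∀ b ∈ W, reach c W i a b) ∧ 2 * (W.card - 1) ≤ cnt c W {i} := by
  intro N
  induction N with
  | zero => intro W h1 h2; omega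
  | succ N IH =>
    intro W hN h2
    by_cases hW2 : W.card = 2
    · obtain ⟨a, b, hab, rfl⟩ := Finset.card_eq_two.mp hW2
      refine ⟨c s(a, b), ?_, ?_⟩
      · intro p hp q hq
        rw [Finset.mem_insert, Finset.mem_singleton] at hp hq
        have hadj : adjC c {a, b} (c s(a,b)) a b :=
          ⟨by simp, by simp, hab, rfl⟩
        rcases hp with rfl | rfl <;> rcases hq with rfl | rfl
        · exact Relation.ReflTransGen.refl
        · exact reach_adj hadj
        · exact reach_adj (adjC_symm hadj)
        · exact Relation.ReflTransGen.refl
      · rw [hW2]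
        have hsub : ({(a, b), (b, a)} : Finset (Fin n × Fin n)) ⊆
            (({a,b} : Finset (Fin n)).offDiag.filter (fun p => c s(p.1, p.2) ∈ ({c s(a,b)} : Finset (Fin k)))) := by
          intro p hp
          rw [Finset.mem_insert, Finset.mem_singleton] at hp
          rcases hp with rfl | rfl <;>
            simp [Finset.mem_offDiag, hab, hab.symm, ← csym c a b]
        have hcard : ({(a, b), (b, a)} : Finset (Fin n × Fin n)).card = 2 := by
          rw [Finset.card_insert_of_notMem (by simp [hab]), Finset.card_singleton]
        have := Finset.card_le_card hsub
        unfold cnt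
        omega
    · -- W.card ≥ 3
      have h3 : 3 ≤ W.card := by omega
      have hne : W.Nonempty := Finset.card_pos.mp (by omega)
      obtain ⟨v, hv⟩ := hne
      set W' := W.erase v with hW'
      have hW'sub : W' ⊆ W := Finset.erase_subset v W
      have hW'card : W'.card = W.card - 1 := Finset.card_erase_of_mem hv
      obtain ⟨i, hSC, hcnt⟩ := IH W' (by omega) (by omega)
      by_cases hstar : ∃ u ∈ W', c s(v, u) = i
      · obtain ⟨u, hu, hcu⟩ := hstar
        have huW : u ∈ W := hW'sub hu
        have hvu : v ≠ u := by rintro rfl; exact (Finset.notMem_erase v W) hu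
        have hreachv : ∀ b ∈ W, reach c W i v b := by
          intro b hb
          by_cases hbv : b = v
          · rw [hbv]; exact Relation.ReflTransGen.refl
          · have hb' : b ∈ W' := Finset.mem_erase.mpr ⟨hbv, hb⟩
            exact (reach_adj (⟨hv, huW, hvu, hcu⟩ : adjC c W i v u)).trans
              (reach_mono hW'sub (hSC u hu b hb'))
        refine ⟨i, ?_, ?_⟩
        · intro a ha b hb
          exact (reach_symm (hreachv a ha)).trans (hreachv b hb)
        · -- cnt bound
          have hdisj : Disjoint (W'.offDiag.filter (fun p => c s(p.1, p.2) ∈ ({i} : Finset (Fin k))))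
              ({(v, u), (u, v)} : Finset (Fin n × Fin n)) := by
            rw [Finset.disjoint_right]
            intro p hp hp'
            rw [Finset.mem_insert, Finset.mem_singleton] at hp
            have := Finset.mem_offDiag.mp (Finset.mem_filter.mp hp').1
            rcases hp with rfl | rfl
            · exact (Finset.notMem_erase v W) this.1
            · exact (Finset.notMem_erase v W) this.2.1
          have hsub : (W'.offDiag.filter (fun p => c s(p.1, p.2) ∈ ({i} : Finset (Fin k))))
              ∪ {(v, u), (u, v)} ⊆
              W.offDiag.filter (fun p => c s(p.1, p.2) ∈ ({i} : Finset (Fin k))) := by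
            intro p hp
            rw [Finset.mem_union] at hp
            rcases hp with hp | hp
            · rw [Finset.mem_filter] at hp ⊢
              refine ⟨?_, hp.2⟩
              have := Finset.mem_offDiag.mp hp.1
              exact Finset.mem_offDiag.mpr ⟨hW'sub this.1, hW'sub this.2.1, this.2.2⟩
            · rw [Finset.mem_insert, Finset.mem_singleton] at hp
              rcases hp with rfl | rfl
              · exact Finset.mem_filter.mpr ⟨Finset.mem_offDiag.mpr ⟨hv, huW, hvu⟩, by simp [hcu]⟩
              · refine Finset.mem_filter.mpr ⟨Finset.mem_offDiag.mpr ⟨huW, hv, hvu.symm⟩, ?_⟩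
                simp only [Finset.mem_singleton]
                rw [← csym c v u]; exact hcu
          have hcard2 : ({(v, u), (u, v)} : Finset (Fin n × Fin n)).card = 2 := by
            rw [Finset.card_insert_of_notMem (by simp [hvu]), Finset.card_singleton]
          have := Finset.card_le_card hsub
          rw [Finset.card_union_of_disjoint hdisj, hcard2] at this
          unfold cnt at *
          omega
      · push_neg at hstar
        have hW'ne : W'.Nonempty := Finset.card_pos.mp (by omega)
        obtain ⟨u₀, hu₀⟩ := hW'ne
        set j := c s(v, u₀) with hj
        have hjne : j ≠ i := hstar u₀ hu₀
        have hconst : ∀ u ∈ W', c s(v, u) = j := by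
          intro u hu
          have : u ∈ W' ∧ c s(v, u) = j := by
            refine reach_stay (A := fun u => u ∈ W' ∧ c s(v, u) = j) ?_ (hSC u₀ hu₀ u hu) ⟨hu₀, rfl⟩
            rintro p q ⟨hp, hq, hpq, hcol⟩ ⟨hpW, hpj⟩
            refine ⟨hq, ?_⟩
            have hvp : v ≠ p := by rintro rfl; exact (Finset.notMem_erase v W) hp
            have hvq : v ≠ q := by rintro rfl; exact (Finset.notMem_erase v W) hq
            rcases hc v p q hvp hpq hvq with h' | h' | h'
            · exact absurd (h'.trans hcol) (hstar p hp)
            · exfalso; exact hstar q hq (by rw [← h', hcol])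
            · rw [← h', hpj]
          exact this.2
        refine ⟨j, ?_, ?_⟩
        · -- spanning connected via star
          have hadjv : ∀ a ∈ W, a ≠ v → adjC c W j a v := by
            intro a ha hav
            have ha' : a ∈ W' := Finset.mem_erase.mpr ⟨hav, ha⟩
            exact ⟨ha, hv, hav, by rw [csym c a v]; exact hconst a ha'⟩
          intro a ha b hb
          by_cases hav : a = v
          · rw [hav]
            by_cases hbv : b = v
            · rw [hbv]; exact Relation.ReflTransGen.refl
            · exact reach_adj (adjC_symm (hadjv b hb hbv))
          · by_cases hbv : b = v
            · rw [hbv]; exact reach_adj (hadjv a ha hav)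
            · exact (reach_adj (hadjv a ha hav)).trans (reach_adj (adjC_symm (hadjv b hb hbv)))
        · -- count: all star edges both orientations
          have hsub : (W'.image (fun u => (v, u))) ∪ (W'.image (fun u => (u, v))) ⊆
              W.offDiag.filter (fun p => c s(p.1, p.2) ∈ ({j} : Finset (Fin k))) := by
            intro p hp
            rw [Finset.mem_union, Finset.mem_image, Finset.mem_image] at hp
            rcases hp with ⟨u, hu, rfl⟩ | ⟨u, hu, rfl⟩
            · have huW : u ∈ W := hW'sub hu
              have hvu : v ≠ u := by rintro rfl; exact (Finset.notMem_erase v W) hu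
              exact Finset.mem_filter.mpr ⟨Finset.mem_offDiag.mpr ⟨hv, huW, hvu⟩,
                by simp [hconst u hu]⟩
            · have huW : u ∈ W := hW'sub hu
              have hvu : v ≠ u := by rintro rfl; exact (Finset.notMem_erase v W) hu
              refine Finset.mem_filter.mpr ⟨Finset.mem_offDiag.mpr ⟨huW, hv, hvu.symm⟩, ?_⟩
              simp only [Finset.mem_singleton]
              rw [← csym c v u]; exact hconst u hu
          have hdisj : Disjoint (W'.image (fun u => (v, u))) (W'.image (fun u => (u, v))) := by
            rw [Finset.disjoint_left]
            rintro p hp hp'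
            rw [Finset.mem_image] at hp hp'
            obtain ⟨u, hu, rfl⟩ := hp
            obtain ⟨u', hu', he⟩ := hp'
            have : u' = v := congrArg Prod.fst he
            exact (Finset.notMem_erase v W) (by rwa [this] at hu')
          have hinj1 : (W'.image (fun u => (v, u))).card = W'.card := by
            apply Finset.card_image_of_injective
            intro a b h; exact congrArg Prod.snd h
          have hinj2 : (W'.image (fun u => (u, v))).card = W'.card := by
            apply Finset.card_image_of_injective
            intro a b h; exact congrArg Prod.fst h
          have := Finset.card_le_card hsub
          rw [Finset.card_union_of_disjoint hdisj, hinj1, hinj2] at this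
          unfold cnt at *
          omega

lemma used_insert (hc : IsGallai c) {v : Fin n} (hv : v ∈ W) (h2 : (W.erase v).Nonempty) :
    ∃ γ, usedC c W ⊆ insert γ (usedC c (W.erase v)) := by
  set s := W.erase v with hs
  have hvs : v ∉ s := Finset.notMem_erase v W
  obtain ⟨u₀, hu₀⟩ := h2
  have hmems : ∀ a ∈ s, a ∈ W := fun a ha => (Finset.mem_erase.mp ha).2
  have hnew : ∀ u₁ ∈ s, ∀ u₂ ∈ s, c s(v, u₁) ∉ usedC c s → c s(v, u₂) ∉ usedC c s →
      c s(v, u₂) = c s(v, u₁) := by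
    intro u₁ h₁ u₂ h₂ hn₁ hn₂
    by_cases he : u₁ = u₂
    · rw [he]
    · have hmem : c s(u₁, u₂) ∈ usedC c s := mem_used_iff.mpr ⟨u₁, h₁, u₂, h₂, he, rfl⟩
      have hvu₁ : v ≠ u₁ := by rintro rfl; exact hvs h₁
      have hvu₂ : v ≠ u₂ := by rintro rfl; exact hvs h₂
      rcases hc u₁ v u₂ hvu₁.symm hvu₂ he with h' | h' | h'
      · exact h'.symm.trans (csym c u₁ v)
      · rw [← h'] at hmem; exact absurd hmem hn₂
      · have : c s(v, u₁) ∈ usedC c s := by rw [csym c v u₁, h']; exact hmem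
        exact absurd this hn₁
  by_cases hex : ∃ u ∈ s, c s(v, u) ∉ usedC c s
  · obtain ⟨u₁, h₁, hn₁⟩ := hex
    refine ⟨c s(v, u₁), ?_⟩
    intro y hy
    rw [mem_used_iff] at hy
    obtain ⟨a, ha, b, hb, hab, rfl⟩ := hy
    rw [Finset.mem_insert]
    by_cases hav : a = v
    · subst hav
      have hb' : b ∈ s := Finset.mem_erase.mpr ⟨fun h => hab h.symm, hb⟩
      by_cases hn : c s(a, b) ∈ usedC c s
      · exact Or.inr hn
      · exact Or.inl (hnew u₁ h₁ b hb' hn₁ hn)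
    · by_cases hbv : b = v
      · subst hbv
        have ha' : a ∈ s := Finset.mem_erase.mpr ⟨hav, ha⟩
        rw [csym c a b]
        by_cases hn : c s(b, a) ∈ usedC c s
        · exact Or.inr hn
        · exact Or.inl (hnew u₁ h₁ a ha' hn₁ hn)
      · exact Or.inr (mem_used_iff.mpr ⟨a, Finset.mem_erase.mpr ⟨hav, ha⟩,
          b, Finset.mem_erase.mpr ⟨hbv, hb⟩, hab, rfl⟩)
  · push_neg at hex
    refine ⟨c s(v, u₀), ?_⟩
    intro y hy
    rw [mem_used_iff] at hy
    obtain ⟨a, ha, b, hb, hab, rfl⟩ := hy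
    rw [Finset.mem_insert]
    by_cases hav : a = v
    · subst hav
      exact Or.inr (hex b (Finset.mem_erase.mpr ⟨fun h => hab h.symm, hb⟩))
    · by_cases hbv : b = v
      · subst hbv
        rw [csym c a b]
        exact Or.inr (hex a (Finset.mem_erase.mpr ⟨hav, ha⟩))
      · exact Or.inr (mem_used_iff.mpr ⟨a, Finset.mem_erase.mpr ⟨hav, ha⟩,
          b, Finset.mem_erase.mpr ⟨hbv, hb⟩, hab, rfl⟩)

lemma lemL (hc : IsGallai c) : ∀ (N : ℕ) (W : Finset (Fin n)), W.card ≤ N →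
    3 ≤ (usedC c W).card →
    ∃ x ∈ usedC c W, ∃ a ∈ W, ∃ b ∈ W, ¬ reach c W x a b := by
  intro N
  induction N with
  | zero =>
    intro W hN h3
    exfalso
    obtain ⟨y, hy⟩ := Finset.card_pos.mp (show 0 < (usedC c W).card by omega)
    obtain ⟨a, ha, _⟩ := mem_used_iff.mp hy
    have := Finset.card_pos.mpr ⟨a, ha⟩
    omega
  | succ N IH =>
    intro W hN h3
    by_contra hcon
    push_neg at hcon
    have hWne : W.Nonempty := by
      obtain ⟨y, hy⟩ := Finset.card_pos.mp (show 0 < (usedC c W).card by omega)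
      obtain ⟨a, ha, _⟩ := mem_used_iff.mp hy
      exact ⟨a, ha⟩
    have hW4 : 4 ≤ W.card := by have := used_card hc hWne; omega
    obtain ⟨v, hv⟩ := hWne
    set W' := W.erase v with hW'def
    have hW'sub : W' ⊆ W := Finset.erase_subset v W
    have hW'card : W'.card = W.card - 1 := Finset.card_erase_of_mem hv
    have hW'ne : W'.Nonempty := Finset.card_pos.mp (by omega)
    have hvW' : v ∉ W' := Finset.notMem_erase v W
    have hmono : usedC c W' ⊆ usedC c W := used_mono hW'sub
    by_cases hA : (usedC c W').card ≤ 2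
    · -- Case A: at most 2 colors off v
      have hdiffne : (usedC c W \ usedC c W').Nonempty := by
        rw [← Finset.card_pos]
        have h1 := Finset.card_sdiff_add_card_eq_card hmono
        omega
      obtain ⟨γ, hγ⟩ := hdiffne
      rw [Finset.mem_sdiff] at hγ
      obtain ⟨hγW, hγn'⟩ := hγ
      have hγstar : ∀ a ∈ W', ∀ b ∈ W', a ≠ b → c s(a, b) ≠ γ := by
        intro a ha b hb hab hcc
        exact hγn' (mem_used_iff.mpr ⟨a, ha, b, hb, hab, hcc⟩)
      obtain ⟨p, hp, q, hq, hpq, hcpq⟩ := mem_used_iff.mp hγW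
      have hstar_a : ∃ a ∈ W', c s(v, a) = γ := by
        by_cases hpv : p = v
        · rw [hpv] at hcpq hpq
          exact ⟨q, Finset.mem_erase.mpr ⟨fun h => hpq h.symm, hq⟩, hcpq⟩
        · by_cases hqv : q = v
          · rw [hqv] at hcpq hpq
            exact ⟨p, Finset.mem_erase.mpr ⟨hpv, hp⟩, (csym c v p).trans hcpq⟩
          · exact absurd hcpq (hγstar p (Finset.mem_erase.mpr ⟨hpv, hp⟩)
              q (Finset.mem_erase.mpr ⟨hqv, hq⟩) hpq)
      obtain ⟨a, haW', hca⟩ := hstar_a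
      have hstar_b : ∃ b ∈ W', c s(v, b) ≠ γ := by
        by_contra hall
        push_neg at hall
        have husedne : (usedC c W').Nonempty := by
          obtain ⟨w₁, w₂, h₁, h₂, hne⟩ := Finset.one_lt_card_iff.mp
            (show 1 < W'.card by omega)
          exact ⟨c s(w₁, w₂), mem_used_iff.mpr ⟨w₁, h₁, w₂, h₂, hne, rfl⟩⟩
        obtain ⟨α, hα⟩ := husedne
        have hαγ : α ≠ γ := fun h => hγn' (h ▸ hα)
        obtain ⟨u₀, hu₀⟩ := hW'ne
        have hreach := hcon α (hmono hα) v hv u₀ (hW'sub hu₀)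
        have hu₀v : u₀ = v := by
          refine reach_stay (A := fun z => z = v) ?_ hreach rfl
          rintro p' q' ⟨hp'W, hq'W, hp'q', hcol⟩ hpv
          rw [hpv] at hcol hp'q'
          have hq'W' : q' ∈ W' := Finset.mem_erase.mpr ⟨fun h => hp'q' h.symm, hq'W⟩
          exact absurd ((hall q' hq'W').symm.trans hcol).symm hαγ
        exact hvW' (hu₀v ▸ hu₀)
      obtain ⟨b, hbW', hcb⟩ := hstar_b
      have hab : a ≠ b := fun h => hcb (h ▸ hca)
      have hreach := hcon γ hγW b (hW'sub hbW') a (hW'sub haW')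
      have hba : a = b := by
        refine reach_stay (A := fun z => z = b) ?_ hreach rfl
        rintro p' q' ⟨hp'W, hq'W, hp'q', hcol⟩ hpb
        rw [hpb] at hcol hp'q'
        by_cases hqv : q' = v
        · rw [hqv] at hcol
          exact absurd ((csym c v b).trans hcol) hcb
        · exact absurd hcol (hγstar b hbW' q' (Finset.mem_erase.mpr ⟨hqv, hq'W⟩) hp'q')
      exact hab hba
    · -- Case B
      obtain ⟨x, hxW', a₀, ha₀, b₀, hb₀, hnr₀⟩ := IH W' (by omega) (by omega)
      have hxW : x ∈ usedC c W := hmono hxW'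
      have houtside : ∀ w ∈ W', ∃ u, (u ∈ W') ∧ ¬ reach c W' x w u := by
        intro w hw
        by_cases hra : reach c W' x w a₀
        · exact ⟨b₀, hb₀, fun hrb => hnr₀ ((reach_symm hra).trans hrb)⟩
        · exact ⟨a₀, ha₀, hra⟩
      have hF2 : ∀ w ∈ W', ∃ a, (a ∈ W' ∧ reach c W' x w a) ∧ c s(v, a) = x := by
        intro w hw
        by_contra hno
        push_neg at hno
        have hreach := hcon x hxW w (hW'sub hw) v hv
        have hAv : v ∈ W' ∧ reach c W' x w v := by
          refine reach_stay (A := fun z => z ∈ W' ∧ reach c W' x w z) ?_ hreach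
            ⟨hw, Relation.ReflTransGen.refl⟩
          rintro p' q' ⟨hpW, hqW, hpq, hcol⟩ ⟨hpW', hrp⟩
          by_cases hqv : q' = v
          · rw [hqv] at hcol
            exact absurd ((csym c v p').trans hcol) (hno p' ⟨hpW', hrp⟩)
          · have hqW'2 : q' ∈ W' := Finset.mem_erase.mpr ⟨hqv, hqW⟩
            exact ⟨hqW'2, hrp.tail ⟨hpW', hqW'2, hpq, hcol⟩⟩
        exact hvW' hAv.1
      have hF3 : ∀ p ∈ W', ∀ u ∈ W', ¬ reach c W' x p u →
          c s(v, p) = x ∨ c s(v, p) = c s(u, p) := by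
        intro p hp u hu hnpu
        obtain ⟨a, ⟨haW', hrua⟩, hcva⟩ := hF2 u hu
        have hnup : ¬ reach c W' x u p := fun h => hnpu (reach_symm h)
        have hcap : c s(a, p) = c s(u, p) := mono_comp hc hu hp hnup hrua
        have hap : a ≠ p := by rintro rfl; exact hnup hrua
        have hup : u ≠ p := by rintro rfl; exact hnpu Relation.ReflTransGen.refl
        have hcupx : c s(u, p) ≠ x := fun h =>
          hnpu (reach_symm (reach_adj ⟨hu, hp, hup, h⟩))
        have hvp : v ≠ p := by rintro rfl; exact hvW' hp
        have hva : v ≠ a := by rintro rfl; exact hvW' haW'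
        rcases hc v a p hva hap hvp with h' | h' | h'
        · exact absurd (hcap.symm.trans (h'.symm.trans hcva)) hcupx
        · exact Or.inr (h'.symm.trans hcap)
        · exact Or.inl (h'.symm.trans hcva)
      have hF4 : ∀ w ∈ W', c s(v, w) = x := by
        intro w hw
        by_contra hγne
        have hcross : ∀ u ∈ W', ¬ reach c W' x w u → c s(u, w) = c s(v, w) := by
          intro u hu hnwu
          have hnuw : ¬ reach c W' x w u := hnwu
          rcases hF3 w hw u hu (fun h => hnwu h) with h' | h'
          · exact absurd h' hγne
          · exact h'.symm
        have hσex : (usedC c W \ {x, c s(v, w)}).Nonempty := by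
          rw [← Finset.card_pos]
          have h1 := Finset.le_card_sdiff ({x, c s(v, w)} : Finset (Fin k)) (usedC c W)
          have h2 : ({x, c s(v, w)} : Finset (Fin k)).card ≤ 2 :=
            (Finset.card_insert_le _ _).trans (by simp)
          omega
        obtain ⟨σ, hσ⟩ := hσex
        rw [Finset.mem_sdiff, Finset.mem_insert, Finset.mem_singleton] at hσ
        obtain ⟨hσW, hσne⟩ := hσ
        have hσx : σ ≠ x := fun h => hσne (Or.inl h)
        have hσγ : σ ≠ c s(v, w) := fun h => hσne (Or.inr h)
        have hreach := hcon σ hσW w (hW'sub hw) v hv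
        have hstay : v ∈ W' ∧ reach c W' x w v := by
          refine reach_stay (A := fun z => z ∈ W' ∧ reach c W' x w z) ?_ hreach
            ⟨hw, Relation.ReflTransGen.refl⟩
          rintro p' q' ⟨hpW, hqW, hpq, hcol⟩ ⟨hpW', hrp⟩
          by_cases hqv : q' = v
          · exfalso
            rw [hqv] at hcol
            obtain ⟨u, hu, hnwu⟩ := houtside w hw
            have hnpu : ¬ reach c W' x p' u := fun h => hnwu (hrp.trans h)
            have hcup : c s(u, p') = c s(v, w) := by
              have h1 : c s(p', u) = c s(w, u) := mono_comp hc hw hu hnwu hrp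
              have h2 : c s(u, w) = c s(v, w) := hcross u hu hnwu
              rw [csym c u p', h1, csym c w u]
              exact h2
            rcases hF3 p' hpW' u hu hnpu with h' | h'
            · exact hσx (hcol.symm.trans ((csym c p' v).trans h'))
            · exact hσγ (hcol.symm.trans ((csym c p' v).trans (h'.trans hcup)))
          · have hqW'2 : q' ∈ W' := Finset.mem_erase.mpr ⟨hqv, hqW⟩
            by_cases hrq : reach c W' x w q'
            · exact ⟨hqW'2, hrq⟩
            · exfalso
              have h1 : c s(p', q') = c s(w, q') := mono_comp hc hw hqW'2 hrq hrp
              have h2 : c s(q', w) = c s(v, w) := hcross q' hqW'2 hrq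
              exact hσγ (hcol.symm.trans (h1.trans ((csym c w q').trans h2)))
        exact hvW' hstay.1
      -- F5
      have hσ'ex : (usedC c W \ {x}).Nonempty := by
        rw [← Finset.card_pos]
        have h1 := Finset.le_card_sdiff ({x} : Finset (Fin k)) (usedC c W)
        have h2 : ({x} : Finset (Fin k)).card = 1 := Finset.card_singleton x
        omega
      obtain ⟨σ', hσ'⟩ := hσ'ex
      rw [Finset.mem_sdiff, Finset.mem_singleton] at hσ'
      obtain ⟨hσ'W, hσ'x⟩ := hσ'
      obtain ⟨u₀, hu₀⟩ := hW'ne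
      have hreach := hcon σ' hσ'W v hv u₀ (hW'sub hu₀)
      have hu₀v : u₀ = v := by
        refine reach_stay (A := fun z => z = v) ?_ hreach rfl
        rintro p' q' ⟨hp'W, hq'W, hp'q', hcol⟩ hpv
        rw [hpv] at hcol hp'q'
        have hq'W' : q' ∈ W' := Finset.mem_erase.mpr ⟨fun h => hp'q' h.symm, hq'W⟩
        exact absurd ((hF4 q' hq'W').symm.trans hcol).symm hσ'x
      exact hvW' (hu₀v ▸ hu₀)


lemma gallaiPartition (hc : IsGallai c) : ∀ (N : ℕ) (W : Finset (Fin n)), W.card ≤ N →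
    2 ≤ W.card →
    ∃ (P : Finset (Finset (Fin n))) (R : Finset (Fin k)),
      (∀ T ∈ P, T ⊆ W ∧ T.Nonempty) ∧
      (∀ T₁ ∈ P, ∀ T₂ ∈ P, T₁ ≠ T₂ → Disjoint T₁ T₂) ∧
      (P.biUnion id = W) ∧
      2 ≤ P.card ∧
      R.card + 1 ≤ P.card ∧ R.card ≤ 2 ∧
      (∀ a ∈ W, ∀ b ∈ W, a ≠ b → (∀ T ∈ P, ¬ (a ∈ T ∧ b ∈ T)) → c s(a, b) ∈ R) := by
  intro N
  induction N with
  | zero => intro W h1 h2; omega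
  | succ N IH =>
    classical
    intro W hN h2
    have hWne : W.Nonempty := Finset.card_pos.mp (by omega)
    by_cases hA : (usedC c W).card ≤ 2
    · -- singleton partition
      have hinj : (W.image (fun a => ({a} : Finset (Fin n)))).card = W.card :=
        Finset.card_image_of_injective _ (fun a b h => Finset.singleton_injective h)
      refine ⟨W.image (fun a => ({a} : Finset (Fin n))), usedC c W, ?_, ?_, ?_, ?_, ?_, hA, ?_⟩
      · intro T hT
        obtain ⟨a, ha, rfl⟩ := Finset.mem_image.mp hT
        exact ⟨Finset.singleton_subset_iff.mpr ha, Finset.singleton_nonempty a⟩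
      · intro T₁ h₁ T₂ h₂ hne
        obtain ⟨a, ha, rfl⟩ := Finset.mem_image.mp h₁
        obtain ⟨b, hb, rfl⟩ := Finset.mem_image.mp h₂
        rw [Finset.disjoint_left]
        intro z hz hz'
        rw [Finset.mem_singleton] at hz hz'
        exact hne (by rw [hz] at hz'; rw [hz'])
      · ext z
        rw [Finset.mem_biUnion]
        constructor
        · rintro ⟨T, hT, hz⟩
          obtain ⟨a, ha, rfl⟩ := Finset.mem_image.mp hT
          rw [id, Finset.mem_singleton] at hz
          rw [hz]; exact ha
        · intro hz
          exact ⟨{z}, Finset.mem_image.mpr ⟨z, hz, rfl⟩, Finset.mem_singleton_self z⟩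
      · rw [hinj]; omega
      · rw [hinj]
        exact used_card hc hWne
      · intro a ha b hb hab _
        exact mem_used_iff.mpr ⟨a, ha, b, hb, hab, rfl⟩
    · -- ≥ 3 colors: use lemL to find disconnected color, collapse component
      obtain ⟨x, hx, a₀, ha₀, b₀, hb₀, hnr⟩ := lemL hc W.card W le_rfl (by omega)
      obtain ⟨s₀, hs₀, t₀, ht₀, hst, hcst⟩ := mem_used_iff.mp hx
      set D := W.filter (fun z => reach c W x s₀ z) with hD
      have hDsub : D ⊆ W := Finset.filter_subset _ W
      have hmemD : ∀ z, z ∈ D ↔ z ∈ W ∧ reach c W x s₀ z := by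
        intro z; rw [hD, Finset.mem_filter]
      have hs₀D : s₀ ∈ D := (hmemD s₀).mpr ⟨hs₀, Relation.ReflTransGen.refl⟩
      have ht₀D : t₀ ∈ D := (hmemD t₀).mpr ⟨ht₀, reach_adj ⟨hs₀, ht₀, hst, hcst⟩⟩
      have hDcard : 2 ≤ D.card := by
        have : ({s₀, t₀} : Finset (Fin n)) ⊆ D := by
          intro z hz
          rw [Finset.mem_insert, Finset.mem_singleton] at hz
          rcases hz with rfl | rfl
          · exact hs₀D
          · exact ht₀D
        have h := Finset.card_le_card this
        rw [Finset.card_insert_of_notMem (by simpa using hst), Finset.card_singleton] at h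
        exact h
      have hw₀ : ∃ w₀ ∈ W, w₀ ∉ D := by
        by_cases hra : reach c W x s₀ a₀
        · refine ⟨b₀, hb₀, fun hmem => ?_⟩
          exact hnr ((reach_symm hra).trans ((hmemD b₀).mp hmem).2)
        · exact ⟨a₀, ha₀, fun hmem => hra ((hmemD a₀).mp hmem).2⟩
      obtain ⟨w₀, hw₀W, hw₀D⟩ := hw₀
      -- mono: edges from outside D into D are constant
      have hM : ∀ w ∈ W, w ∉ D → ∀ u ∈ D, c s(u, w) = c s(s₀, w) := by
        intro w hw hwD u hu
        have hnrw : ¬ reach c W x s₀ w := fun h => hwD ((hmemD w).mpr ⟨hw, h⟩)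
        exact mono_comp hc hs₀ hw hnrw ((hmemD u).mp hu).2
      set W'' := insert s₀ (W \ D) with hW''
      have hmemW'' : ∀ z, z ∈ W'' ↔ z = s₀ ∨ (z ∈ W ∧ z ∉ D) := by
        intro z; rw [hW'', Finset.mem_insert, Finset.mem_sdiff]
      have hW''sub : W'' ⊆ W := by
        intro z hz
        rcases (hmemW'' z).mp hz with rfl | hz
        · exact hs₀
        · exact hz.1
      have hs₀W'' : s₀ ∈ W'' := (hmemW'' s₀).mpr (Or.inl rfl)
      have hW''card : W''.card < W.card := by
        have h1 : (W \ D).card = W.card - D.card := Finset.card_sdiff_of_subset hDsub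
        have h2 : W''.card ≤ (W \ D).card + 1 := Finset.card_insert_le _ _
        have h3 := Finset.card_le_card hDsub
        omega
      have hW''2 : 2 ≤ W''.card := by
        have : ({s₀, w₀} : Finset (Fin n)) ⊆ W'' := by
          intro z hz
          rw [Finset.mem_insert, Finset.mem_singleton] at hz
          rcases hz with h | h
          · rw [h]; exact hs₀W''
          · rw [h]; exact (hmemW'' w₀).mpr (Or.inr ⟨hw₀W, hw₀D⟩)
        have h := Finset.card_le_card this
        have hs₀w₀ : s₀ ≠ w₀ := by rintro rfl; exact hw₀D hs₀D
        rw [Finset.card_insert_of_notMem (by simpa using hs₀w₀), Finset.card_singleton] at h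
        exact h
      obtain ⟨P'', R, hparts'', hdisj'', hunion'', hP2'', hcards'', hR2'', hcross''⟩ :=
        IH W'' (by omega) hW''2
      -- the part containing s₀
      have hT₀ : ∃ T₀ ∈ P'', s₀ ∈ T₀ := by
        have : s₀ ∈ P''.biUnion id := hunion'' ▸ hs₀W''
        rw [Finset.mem_biUnion] at this
        obtain ⟨T₀, h1, h2⟩ := this
        exact ⟨T₀, h1, h2⟩
      obtain ⟨T₀, hT₀P, hs₀T₀⟩ := hT₀
      -- no other part contains s₀, and parts without s₀ are disjoint from D
      have hkey : ∀ T ∈ P'', s₀ ∉ T → Disjoint T D := by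
        intro T hT hs₀T
        rw [Finset.disjoint_left]
        intro z hzT hzD
        rcases (hmemW'' z).mp ((hparts'' T hT).1 hzT) with rfl | hz
        · exact hs₀T hzT
        · exact hz.2 hzD
      set lift : Finset (Fin n) → Finset (Fin n) := fun T => if s₀ ∈ T then T ∪ D else T
        with hlift
      have hliftInj : Set.InjOn lift P'' := by
        intro T₁ h₁ T₂ h₂ he
        by_contra hne
        have hd := hdisj'' T₁ h₁ T₂ h₂ hne
        by_cases c₁ : s₀ ∈ T₁
        · have c₂ : s₀ ∉ T₂ := fun c₂ => (Finset.disjoint_left.mp hd) c₁ c₂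
          rw [hlift] at he
          simp only [if_pos c₁, if_neg c₂] at he
          have : s₀ ∈ T₂ := he ▸ (Finset.mem_union_left D c₁)
          exact c₂ this
        · by_cases c₂ : s₀ ∈ T₂
          · rw [hlift] at he
            simp only [if_pos c₂, if_neg c₁] at he
            have : s₀ ∈ T₁ := he ▸ (Finset.mem_union_left D c₂)
            exact c₁ this
          · rw [hlift] at he
            simp only [if_neg c₁, if_neg c₂] at he
            exact hne he
      set P := P''.image lift with hP
      have hmemP : ∀ T', T' ∈ P ↔ ∃ T ∈ P'', lift T = T' := by
        intro T'; rw [hP, Finset.mem_image]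
      have hliftT₀ : lift T₀ = T₀ ∪ D := by rw [hlift]; simp only [if_pos hs₀T₀]
      have hliftOther : ∀ T ∈ P'', T ≠ T₀ → lift T = T := by
        intro T hT hne
        have hs₀T : s₀ ∉ T := by
          intro hmem
          exact (Finset.disjoint_left.mp (hdisj'' T hT T₀ hT₀P hne)) hmem hs₀T₀
        rw [hlift]; simp only [if_neg hs₀T]
      have hPcard : P.card = P''.card := by
        rw [hP, Finset.card_image_of_injOn hliftInj]
      refine ⟨P, R, ?_, ?_, ?_, by omega, ?_, hR2'', ?_⟩
      · -- parts ⊆ W, nonempty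
        intro T' hT'
        obtain ⟨T, hT, rfl⟩ := (hmemP _).mp hT'
        obtain ⟨hTsub, hTne⟩ := hparts'' T hT
        by_cases hs : s₀ ∈ T
        · rw [hlift]; simp only [if_pos hs]
          constructor
          · intro z hz
            rcases Finset.mem_union.mp hz with hz | hz
            · exact hW''sub (hTsub hz)
            · exact hDsub hz
          · exact hTne.mono Finset.subset_union_left
        · rw [hlift]; simp only [if_neg hs]
          exact ⟨hTsub.trans hW''sub, hTne⟩
      · -- disjoint
        intro T₁' h₁ T₂' h₂ hne
        obtain ⟨T₁, hT₁, rfl⟩ := (hmemP _).mp h₁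
        obtain ⟨T₂, hT₂, rfl⟩ := (hmemP _).mp h₂
        have hne'' : T₁ ≠ T₂ := fun h => hne (by rw [h])
        have hd := hdisj'' T₁ hT₁ T₂ hT₂ hne''
        by_cases c₁ : s₀ ∈ T₁
        · have c₂ : s₀ ∉ T₂ := fun c₂ => (Finset.disjoint_left.mp hd) c₁ c₂
          rw [hlift]
          simp only [if_pos c₁, if_neg c₂]
          exact Finset.disjoint_union_left.mpr ⟨hd, (hkey T₂ hT₂ c₂).symm⟩
        · by_cases c₂ : s₀ ∈ T₂
          · rw [hlift]
            simp only [if_pos c₂, if_neg c₁]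
            exact Finset.disjoint_union_right.mpr ⟨hd, hkey T₁ hT₁ c₁⟩
          · rw [hlift]
            simp only [if_neg c₁, if_neg c₂]
            exact hd
      · -- union
        ext z
        rw [Finset.mem_biUnion]
        constructor
        · rintro ⟨T', hT', hz⟩
          obtain ⟨T, hT, rfl⟩ := (hmemP _).mp hT'
          rw [id] at hz
          by_cases hs : s₀ ∈ T
          · rw [hlift] at hz
            simp only [if_pos hs] at hz
            rcases Finset.mem_union.mp hz with hz | hz
            · exact hW''sub ((hparts'' T hT).1 hz)
            · exact hDsub hz
          · rw [hlift] at hz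
            simp only [if_neg hs] at hz
            exact hW''sub ((hparts'' T hT).1 hz)
        · intro hz
          by_cases hzD : z ∈ D
          · refine ⟨lift T₀, (hmemP _).mpr ⟨T₀, hT₀P, rfl⟩, ?_⟩
            rw [id, hliftT₀]
            exact Finset.mem_union_right _ hzD
          · have hzW'' : z ∈ W'' := (hmemW'' z).mpr (Or.inr ⟨hz, hzD⟩)
            have : z ∈ P''.biUnion id := hunion'' ▸ hzW''
            rw [Finset.mem_biUnion] at this
            obtain ⟨T, hT, hzT⟩ := this
            refine ⟨lift T, (hmemP _).mpr ⟨T, hT, rfl⟩, ?_⟩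
            rw [id]
            by_cases hs : s₀ ∈ T
            · rw [hlift]; simp only [if_pos hs]
              exact Finset.mem_union_left _ hzT
            · rw [hlift]; simp only [if_neg hs]
              exact hzT
      · -- cards
        rw [hPcard]
        exact hcards''
      · -- cross edges
        intro a ha b hb hab hnc
        by_cases haD : a ∈ D
        · by_cases hbD : b ∈ D
          · exfalso
            refine hnc (lift T₀) ((hmemP _).mpr ⟨T₀, hT₀P, rfl⟩) ?_
            rw [hliftT₀]
            exact ⟨Finset.mem_union_right _ haD, Finset.mem_union_right _ hbD⟩
          · -- a ∈ D, b ∉ D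
            have hcol : c s(a, b) = c s(s₀, b) := hM b hb hbD a haD
            rw [hcol]
            have hbW'' : b ∈ W'' := (hmemW'' b).mpr (Or.inr ⟨hb, hbD⟩)
            have hs₀b : s₀ ≠ b := by rintro rfl; exact hbD hs₀D
            refine hcross'' s₀ hs₀W'' b hbW'' hs₀b ?_
            intro T hT ⟨hsT, hbT⟩
            refine hnc (lift T) ((hmemP _).mpr ⟨T, hT, rfl⟩) ?_
            rw [hlift]
            simp only [if_pos hsT]
            exact ⟨Finset.mem_union_right _ haD, Finset.mem_union_left _ hbT⟩
        · by_cases hbD : b ∈ D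
          · have hcol : c s(a, b) = c s(a, s₀) := by
              rw [csym c a b, csym c a s₀]
              exact hM a ha haD b hbD
            rw [hcol]
            have haW'' : a ∈ W'' := (hmemW'' a).mpr (Or.inr ⟨ha, haD⟩)
            have has₀ : a ≠ s₀ := by rintro rfl; exact haD hs₀D
            refine hcross'' a haW'' s₀ hs₀W'' has₀ ?_
            intro T hT ⟨haT, hsT⟩
            refine hnc (lift T) ((hmemP _).mpr ⟨T, hT, rfl⟩) ?_
            rw [hlift]
            simp only [if_pos hsT]
            exact ⟨Finset.mem_union_left _ haT, Finset.mem_union_right _ hbD⟩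
          · have haW'' : a ∈ W'' := (hmemW'' a).mpr (Or.inr ⟨ha, haD⟩)
            have hbW'' : b ∈ W'' := (hmemW'' b).mpr (Or.inr ⟨hb, hbD⟩)
            refine hcross'' a haW'' b hbW'' hab ?_
            intro T hT ⟨haT, hbT⟩
            refine hnc (lift T) ((hmemP _).mpr ⟨T, hT, rfl⟩) ?_
            by_cases hs : s₀ ∈ T
            · rw [hlift]; simp only [if_pos hs]
              exact ⟨Finset.mem_union_left _ haT, Finset.mem_union_left _ hbT⟩
            · rw [hlift]; simp only [if_neg hs]
              exact ⟨haT, hbT⟩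


lemma sqhelp (m : ℕ) : m * m - m = m * (m - 1) := by
  cases m with
  | zero => rfl
  | succ t =>
    have h1 : (t + 1) * (t + 1) = (t + 1) * t + (t + 1) := by ring
    have h2 : t + 1 - 1 = t := rfl
    rw [h2, h1]
    omega

lemma mainCount (hc : IsGallai c) : ∀ (N : ℕ) (W : Finset (Fin n)), W.card ≤ N → ∀ ℓ : ℕ,
    ∃ S : Finset (Fin k), S.card ≤ ℓ ∧
      W.card * (W.card - 1) ≤ cnt c W S + (W.card - ℓ) * (W.card - ℓ - 1) := by
  intro N
  induction N with
  | zero =>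
    intro W hN ℓ
    refine ⟨∅, by simp, ?_⟩
    have : W.card = 0 := by omega
    rw [this]
    simp
  | succ N IH =>
    intro W hN ℓ
    by_cases hw1 : W.card ≤ 1
    · refine ⟨∅, by simp, ?_⟩
      have : W.card * (W.card - 1) = 0 := by
        rcases (show W.card = 0 ∨ W.card = 1 by omega) with h | h <;> rw [h]
      rw [this]
      exact Nat.zero_le _
    · by_cases hl0 : ℓ = 0
      · refine ⟨∅, by simp, ?_⟩
        subst hl0
        simp only [Nat.sub_zero]
        exact Nat.le_add_left _ _
      · by_cases hl1 : ℓ = 1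
        · subst hl1
          obtain ⟨i, _, hcnt⟩ := lemB hc W.card W le_rfl (by omega)
          refine ⟨{i}, by simp, ?_⟩
          obtain ⟨m, hm⟩ : ∃ m, W.card = m + 2 := ⟨W.card - 2, by omega⟩
          rw [hm] at hcnt ⊢
          have e1 : m + 2 - 1 = m + 1 := by omega
          have e2 : m + 2 - 1 - 1 = m := by omega
          rw [e1] at hcnt
          rw [e2, e1]
          have : (m + 2) * (m + 1) = 2 * (m + 1) + (m + 1) * m := by ring
          omega
        · -- ℓ ≥ 2, W.card ≥ 2
          have hl2 : 2 ≤ ℓ := by omega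
          obtain ⟨P, R, hparts, hdisj, hunion, hP2, hcards, hR2, hcross⟩ :=
            gallaiPartition hc W.card W le_rfl (by omega)
          have hTsmall : ∀ T ∈ P, T.card < W.card := by
            intro T hT
            obtain ⟨T₂, hT₂, hTne⟩ :=
              Finset.exists_mem_ne (show 1 < P.card by omega) T
            obtain ⟨y, hy⟩ := (hparts T₂ hT₂).2
            have hyW : y ∈ W := (hparts T₂ hT₂).1 hy
            have hyT : y ∉ T := fun hmem =>
              (Finset.disjoint_left.mp (hdisj T₂ hT₂ T hT hTne)) hy hmem
            have : T ⊆ W.erase y := by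
              intro z hz
              exact Finset.mem_erase.mpr ⟨fun h => hyT (h ▸ hz), (hparts T hT).1 hz⟩
            have h1 := Finset.card_le_card this
            have h2 : (W.erase y).card = W.card - 1 := Finset.card_erase_of_mem hyW
            omega
          have hPne : P.Nonempty := Finset.card_pos.mp (by omega)
          have hsz : ∀ T ∈ P, 1 ≤ T.card := fun T hT => Finset.card_pos.mpr (hparts T hT).2
          obtain ⟨bud, hbudsum, hbudineq⟩ := budget P Finset.card hPne hsz (ℓ - R.card)
          have hsumT : ∑ T ∈ P, T.card = W.card := by
            have h0 : (P.biUnion id).card = ∑ u ∈ P, (id u).card := Finset.card_biUnion hdisj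
            rw [hunion] at h0
            exact h0.symm
          have hex : ∀ T ∈ P, ∃ ST : Finset (Fin k), ST.card ≤ bud T ∧
              T.card * (T.card - 1) ≤ cnt c T ST +
                (T.card - bud T) * (T.card - bud T - 1) := by
            intro T hT
            exact IH T (by have := hTsmall T hT; omega) (bud T)
          choose! F hF1 hF2 using hex
          set S := R ∪ P.biUnion F with hS
          have hFS : ∀ T ∈ P, F T ⊆ S := by
            intro T hT
            exact (Finset.subset_biUnion_of_mem F hT).trans Finset.subset_union_right
          have hRS : R ⊆ S := Finset.subset_union_left
          refine ⟨S, ?_, ?_⟩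
          · -- card bound
            have h1 : S.card ≤ R.card + (P.biUnion F).card := by
              rw [hS]; exact Finset.card_union_le _ _
            have h2 : (P.biUnion F).card ≤ ∑ T ∈ P, (F T).card := Finset.card_biUnion_le
            have h3 : ∑ T ∈ P, (F T).card ≤ ∑ T ∈ P, bud T := Finset.sum_le_sum hF1
            omega
          · -- counting
            set cross := W.offDiag \ P.biUnion (fun T => T.offDiag) with hcrossdef
            have hoffsub : P.biUnion (fun T => T.offDiag) ⊆ W.offDiag := by
              intro p hp
              rw [Finset.mem_biUnion] at hp
              obtain ⟨T, hT, hpT⟩ := hp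
              rw [Finset.mem_offDiag] at hpT ⊢
              exact ⟨(hparts T hT).1 hpT.1, (hparts T hT).1 hpT.2.1, hpT.2.2⟩
            have hoffdisj : ∀ T₁ ∈ P, ∀ T₂ ∈ P, T₁ ≠ T₂ →
                Disjoint (T₁.offDiag) (T₂.offDiag) := by
              intro T₁ h₁ T₂ h₂ hne
              rw [Finset.disjoint_left]
              intro p hp hp'
              rw [Finset.mem_offDiag] at hp hp'
              exact (Finset.disjoint_left.mp (hdisj T₁ h₁ T₂ h₂ hne)) hp.1 hp'.1
            have hcrosscard : cross.card + ∑ T ∈ P, T.offDiag.card = W.offDiag.card := by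
              rw [hcrossdef, ← Finset.card_biUnion hoffdisj]
              exact Finset.card_sdiff_add_card_eq_card hoffsub
            -- identity : W.card*(W.card-1) = cross.card + Σ T.card*(T.card-1)
            have hident : W.card * (W.card - 1) = cross.card + ∑ T ∈ P, T.card * (T.card - 1) := by
              have h1 : W.offDiag.card = W.card * (W.card - 1) := by
                rw [Finset.offDiag_card, sqhelp]
              have h2 : ∀ T ∈ P, T.offDiag.card = T.card * (T.card - 1) := by
                intro T _; rw [Finset.offDiag_card, sqhelp]
              rw [Finset.sum_congr rfl h2] at hcrosscard
              omega
            -- cross edges colored in R ⊆ S; inside edges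
            have hsubU : cross ∪ P.biUnion (fun T => T.offDiag.filter (fun p => c s(p.1, p.2) ∈ F T))
                ⊆ W.offDiag.filter (fun p => c s(p.1, p.2) ∈ S) := by
              intro p hp
              rw [Finset.mem_union] at hp
              rcases hp with hp | hp
              · rw [hcrossdef, Finset.mem_sdiff] at hp
                obtain ⟨hpW, hpn⟩ := hp
                rw [Finset.mem_filter]
                refine ⟨hpW, ?_⟩
                rw [Finset.mem_offDiag] at hpW
                refine hRS (hcross p.1 hpW.1 p.2 hpW.2.1 hpW.2.2 ?_)
                intro T hT ⟨h1, h2⟩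
                refine hpn ?_
                rw [Finset.mem_biUnion]
                exact ⟨T, hT, Finset.mem_offDiag.mpr ⟨h1, h2, hpW.2.2⟩⟩
              · rw [Finset.mem_biUnion] at hp
                obtain ⟨T, hT, hpT⟩ := hp
                rw [Finset.mem_filter] at hpT ⊢
                refine ⟨hoffsub (Finset.mem_biUnion.mpr ⟨T, hT, hpT.1⟩), hFS T hT hpT.2⟩
            have hdisjU : Disjoint cross
                (P.biUnion (fun T => T.offDiag.filter (fun p => c s(p.1, p.2) ∈ F T))) := by
              rw [Finset.disjoint_left]
              intro p hp hp'
              rw [hcrossdef, Finset.mem_sdiff] at hp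
              rw [Finset.mem_biUnion] at hp'
              obtain ⟨T, hT, hpT⟩ := hp'
              exact hp.2 (Finset.mem_biUnion.mpr ⟨T, hT, (Finset.mem_filter.mp hpT).1⟩)
            have hdisjI : ∀ T₁ ∈ P, ∀ T₂ ∈ P, T₁ ≠ T₂ →
                Disjoint (T₁.offDiag.filter (fun p => c s(p.1, p.2) ∈ F T₁))
                  (T₂.offDiag.filter (fun p => c s(p.1, p.2) ∈ F T₂)) := by
              intro T₁ h₁ T₂ h₂ hne
              exact (hoffdisj T₁ h₁ T₂ h₂ hne).mono
                (Finset.filter_subset _ _) (Finset.filter_subset _ _)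
            have hcntlow : cross.card + ∑ T ∈ P, cnt c T (F T) ≤ cnt c W S := by
              have h1 := Finset.card_le_card hsubU
              rw [Finset.card_union_of_disjoint hdisjU, Finset.card_biUnion hdisjI] at h1
              exact h1
            -- per-part bounds summed
            have hsum2 : ∑ T ∈ P, T.card * (T.card - 1) ≤ ∑ T ∈ P, cnt c T (F T) +
                ∑ T ∈ P, (T.card - bud T) * (T.card - bud T - 1) := by
              rw [← Finset.sum_add_distrib]
              exact Finset.sum_le_sum hF2
            have hfin : ((∑ T ∈ P, T.card) - (ℓ - R.card) - (P.card - 1)) *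
                ((∑ T ∈ P, T.card) - (ℓ - R.card) - (P.card - 1) - 1)
                ≤ (W.card - ℓ) * (W.card - ℓ - 1) := by
              rw [hsumT]
              apply fmono
              omega
            have := hbudineq.trans hfin
            omega


lemma sq1 (d : ℕ) : (d + 1) * d = d * (d - 1) + 2 * d := by
  cases d with
  | zero => rfl
  | succ f =>
    have h : f + 1 - 1 = f := rfl
    rw [h]
    ring

lemma sumId (n : ℕ) : ∀ ℓ : ℕ,
    2 * (∑ j ∈ Finset.range ℓ, (n - 1 - j)) + (n - ℓ) * (n - ℓ - 1) = n * (n - 1) := by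
  intro ℓ
  induction ℓ with
  | zero => simp [sqhelp]
  | succ ℓ ih =>
    rw [Finset.sum_range_succ]
    by_cases h : ℓ < n
    · obtain ⟨d, hd⟩ : ∃ d, n - ℓ = d + 1 := ⟨n - ℓ - 1, by omega⟩
      have e1 : n - (ℓ + 1) = d := by omega
      have e2 : n - 1 - ℓ = d := by omega
      have e3 : n - ℓ - 1 = d := by omega
      rw [e3, hd] at ih
      rw [e1, e2]
      have h4 := sq1 d
      omega
    · have e1 : n - 1 - ℓ = 0 := by omega
      have e2 : n - (ℓ + 1) = 0 := by omega
      have e3 : n - ℓ = 0 := by omega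
      rw [e3] at ih
      rw [e1, e2]
      simp only [Nat.zero_sub, Nat.mul_zero, Nat.zero_mul, Nat.add_zero] at ih ⊢
      omega

lemma sortedSum (k : ℕ) (e : ℕ → ℕ) (hdec : ∀ i j, i ≤ j → j < k → e j ≤ e i) :
    ∀ (N : ℕ) (S : Finset ℕ), S.card ≤ N → (∀ i ∈ S, i < k) →
      ∑ i ∈ S, e i ≤ ∑ j ∈ Finset.range S.card, e j := by
  intro N
  induction N with
  | zero =>
    intro S hS _
    have : S = ∅ := Finset.card_eq_zero.mp (by omega)
    rw [this]
    simp
  | succ N IH =>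
    intro S hS hSk
    by_cases hne : S.Nonempty
    · set M := S.max' hne with hM
      have hMS : M ∈ S := S.max'_mem hne
      have hMk : M < k := hSk M hMS
      have hcard : (S.erase M).card = S.card - 1 := Finset.card_erase_of_mem hMS
      have hScard1 : 1 ≤ S.card := Finset.card_pos.mpr hne
      have hMlarge : S.card ≤ M + 1 := by
        have hsub : S ⊆ Finset.range (M + 1) := by
          intro z hz
          rw [Finset.mem_range]
          exact Nat.lt_succ_of_le (S.le_max' z hz)
        have := Finset.card_le_card hsub
        simpa using this
      have heM : e M ≤ e (S.card - 1) := hdec (S.card - 1) M (by omega) hMk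
      have hxsum : ∑ i ∈ S, e i = ∑ i ∈ S.erase M, e i + e M :=
        (Finset.sum_erase_add S e hMS).symm
      have hsub2 : ∀ i ∈ S.erase M, i < k := fun i hi => hSk i (Finset.mem_erase.mp hi).2
      have hIH := IH (S.erase M) (by omega) hsub2
      have hrange : ∑ j ∈ Finset.range (S.erase M).card, e j ≤
          ∑ j ∈ Finset.range (S.card - 1), e j := by
        rw [hcard]
      have hfin : ∑ j ∈ Finset.range S.card, e j
          = ∑ j ∈ Finset.range (S.card - 1), e j + e (S.card - 1) := by
        obtain ⟨t, ht⟩ : ∃ t, S.card = t + 1 := ⟨S.card - 1, by omega⟩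
        rw [ht, Finset.sum_range_succ]
        simp
      omega
    · rw [Finset.not_nonempty_iff_eq_empty] at hne
      rw [hne]
      simp

lemma colorSum (c : Sym2 (Fin n) → Fin k) (S : Finset (Fin k)) :
    ∑ i ∈ S, colorCard c i =
      (Finset.univ.filter (fun E : Sym2 (Fin n) => ¬ E.IsDiag ∧ c E ∈ S)).card := by
  classical
  have hdisj : ∀ i ∈ S, ∀ j ∈ S, i ≠ j →
      Disjoint (Finset.univ.filter (fun E : Sym2 (Fin n) => ¬ E.IsDiag ∧ c E = i))
        (Finset.univ.filter (fun E : Sym2 (Fin n) => ¬ E.IsDiag ∧ c E = j)) := by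
    intro i _ j _ hij
    rw [Finset.disjoint_left]
    intro E hE hE'
    rw [Finset.mem_filter] at hE hE'
    exact hij (hE.2.2 ▸ hE'.2.2 ▸ rfl)
  have hcard := Finset.card_biUnion hdisj
  have hun : S.biUnion (fun i => Finset.univ.filter (fun E : Sym2 (Fin n) => ¬ E.IsDiag ∧ c E = i))
      = Finset.univ.filter (fun E : Sym2 (Fin n) => ¬ E.IsDiag ∧ c E ∈ S) := by
    ext E
    rw [Finset.mem_biUnion, Finset.mem_filter]
    constructor
    · rintro ⟨i, hi, hE⟩
      rw [Finset.mem_filter] at hE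
      exact ⟨hE.1, hE.2.1, hE.2.2 ▸ hi⟩
    · rintro ⟨h1, h2, h3⟩
      exact ⟨c E, h3, Finset.mem_filter.mpr ⟨h1, h2, rfl⟩⟩
  rw [← hun, hcard]
  unfold colorCard
  rfl

lemma cnt_univ_double (c : Sym2 (Fin n) → Fin k) (S : Finset (Fin k)) :
    cnt c Finset.univ S =
      2 * (Finset.univ.filter (fun E : Sym2 (Fin n) => ¬ E.IsDiag ∧ c E ∈ S)).card := by
  classical
  have hmem : ∀ p ∈ Finset.univ.offDiag.filter (fun p : Fin n × Fin n => c s(p.1, p.2) ∈ S),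
      s(p.1, p.2) ∈ Finset.univ.filter (fun E : Sym2 (Fin n) => ¬ E.IsDiag ∧ c E ∈ S) := by
    intro p hp
    rw [Finset.mem_filter] at hp
    obtain ⟨hpo, hpc⟩ := hp
    rw [Finset.mem_offDiag] at hpo
    rw [Finset.mem_filter]
    exact ⟨Finset.mem_univ _, by rw [Sym2.mk_isDiag_iff]; exact hpo.2.2, hpc⟩
  have hstep := Finset.card_eq_sum_card_fiberwise hmem
  have hfib0 : ∀ (a b : Fin n),
      s(a, b) ∈ Finset.univ.filter (fun E : Sym2 (Fin n) => ¬ E.IsDiag ∧ c E ∈ S) →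
      ((Finset.univ.offDiag.filter (fun p : Fin n × Fin n => c s(p.1, p.2) ∈ S)).filter
        (fun p => s(p.1, p.2) = s(a, b))).card = 2 := by
    intro a b hE
    rw [Finset.mem_filter] at hE
    obtain ⟨-, hEd, hEc⟩ := hE
    have hab : a ≠ b := by rwa [Sym2.mk_isDiag_iff] at hEd
    have hset : (Finset.univ.offDiag.filter (fun p : Fin n × Fin n => c s(p.1, p.2) ∈ S)).filter
        (fun p => s(p.1, p.2) = s(a, b)) = {(a, b), (b, a)} := by
      ext p
      rw [Finset.mem_filter, Finset.mem_filter, Finset.mem_insert, Finset.mem_singleton]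
      constructor
      · rintro ⟨⟨_, _⟩, hps⟩
        rcases Sym2.eq_iff.mp hps with ⟨h1, h2⟩ | ⟨h1, h2⟩
        · left; exact Prod.ext h1 h2
        · right; exact Prod.ext h1 h2
      · rintro (rfl | rfl)
        · exact ⟨⟨Finset.mem_offDiag.mpr ⟨Finset.mem_univ _, Finset.mem_univ _, hab⟩, hEc⟩, rfl⟩
        · refine ⟨⟨Finset.mem_offDiag.mpr ⟨Finset.mem_univ _, Finset.mem_univ _, hab.symm⟩,
            ?_⟩, ?_⟩
          · show c s(b, a) ∈ S
            rw [← csym c a b]; exact hEc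
          · show s(b, a) = s(a, b)
            exact Sym2.eq_swap
    rw [hset, Finset.card_insert_of_notMem (by simp [hab]), Finset.card_singleton]
  have hfib : ∀ E ∈ Finset.univ.filter (fun E : Sym2 (Fin n) => ¬ E.IsDiag ∧ c E ∈ S),
      ((Finset.univ.offDiag.filter (fun p : Fin n × Fin n => c s(p.1, p.2) ∈ S)).filter
        (fun p => s(p.1, p.2) = E)).card = 2 := by
    intro E
    induction E using Sym2.inductionOn with
    | hf a b => exact hfib0 a b
  unfold cnt
  rw [hstep, Finset.sum_congr rfl hfib, Finset.sum_const, smul_eq_mul, mul_comm]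

end Gallai

theorem gallai_partial_sums (n k : ℕ) (e : ℕ → ℕ)
    (hdec : ∀ i j, i ≤ j → j < k → e j ≤ e i)
    (hsum : ∑ i ∈ Finset.range k, e i = n * (n - 1) / 2)
    (c : Sym2 (Fin n) → Fin k) (hc : IsGallai c)
    (hdist : ∀ i : Fin k, colorCard c i = e i.1) :
    ∀ ℓ : ℕ, 1 ≤ ℓ → ℓ ≤ k →
      ∑ j ∈ Finset.range ℓ, (n - 1 - j) ≤ ∑ i ∈ Finset.range ℓ, e i := by
  intro ℓ _ _
  obtain ⟨S, hScard, hSbound⟩ :=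
    Gallai.mainCount hc (Finset.univ : Finset (Fin n)).card Finset.univ le_rfl ℓ
  have huniv : (Finset.univ : Finset (Fin n)).card = n := by
    rw [Finset.card_univ, Fintype.card_fin]
  rw [huniv] at hSbound
  -- cnt = 2 * Σ_{i∈S} e i
  have hcnt : Gallai.cnt c Finset.univ S = 2 * ∑ i ∈ S, e i.1 := by
    rw [Gallai.cnt_univ_double, ← Gallai.colorSum]
    congr 1
    exact Finset.sum_congr rfl (fun i _ => hdist i)
  -- Σ_{i ∈ S} e i.1 ≤ Σ_{j < ℓ} e j
  have hsorted : ∑ i ∈ S, e i.1 ≤ ∑ j ∈ Finset.range ℓ, e j := by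
    have himg : ∑ i ∈ S, e i.1 = ∑ i ∈ S.image Fin.val, e i := by
      rw [Finset.sum_image (by intro a _ b _ h; exact Fin.val_injective h)]
    have hcard2 : (S.image Fin.val).card = S.card :=
      Finset.card_image_of_injective _ Fin.val_injective
    have hlt : ∀ i ∈ S.image Fin.val, i < k := by
      intro i hi
      obtain ⟨j, _, rfl⟩ := Finset.mem_image.mp hi
      exact j.isLt
    have h1 := Gallai.sortedSum k e hdec (S.image Fin.val).card (S.image Fin.val) le_rfl hlt
    have h2 : ∑ j ∈ Finset.range (S.image Fin.val).card, e j ≤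
        ∑ j ∈ Finset.range ℓ, e j := by
      apply Finset.sum_le_sum_of_subset
      apply Finset.range_subset_range.mpr
      omega
    omega
  have hid := Gallai.sumId n ℓ
  omega
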